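/- In a unital category satisfying the condition that every morphism with zero kernel is a monomorphism, if k : X → A and l : Y → A are Bourn-normal monomorphisms whose pullback is a zero object, then k and l Huq-commute. -/

import Mathlib

open CategoryTheory CategoryTheory.Limits

universe v u

noncomputable section

variable {C : Type u} [Category.{v} C]

/-- A pair of morphisms with common codomain is jointly strongly epimorphic:
it has the lifting property against all monomorphisms. -/
def JointlyStrongEpi {X Y Z : C} (f : X ⟶ Z) (g : Y ⟶ Z) : Prop :=
  ∀ {U V : C} (m : U ⟶ V) (_ : Mono m) (h : Z ⟶ V) (u : X ⟶ U) (v : Y ⟶ U),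
    u ≫ m = f ≫ h → v ≫ m = g ≫ h → ∃ t : Z ⟶ U, t ≫ m = h

variable (C) in
/-- A unital category: pointed, finitely complete, and the product inclusions
`⟨1,0⟩ : X → X × Y` and `⟨0,1⟩ : Y → X × Y` are jointly strongly epimorphic. -/
class Unital [HasZeroObject C] [HasZeroMorphisms C] [HasFiniteLimits C] : Prop where
  jse : ∀ X Y : C, JointlyStrongEpi (prod.lift (𝟙 X) (0 : X ⟶ Y)) (prod.lift (0 : Y ⟶ X) (𝟙 Y))

/-- `f : X ⟶ A` and `g : Y ⟶ A` Huq-commute: there is a cooperator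
`φ : X × Y ⟶ A` with `φ∘⟨1,0⟩ = f` and `φ∘⟨0,1⟩ = g`. -/
def HuqCommute [HasZeroMorphisms C] [HasFiniteLimits C] {X Y A : C} (f : X ⟶ A) (g : Y ⟶ A) : Prop :=
  ∃ φ : X ⨯ Y ⟶ A, prod.lift (𝟙 X) 0 ≫ φ = f ∧ prod.lift 0 (𝟙 Y) ≫ φ = g

variable [HasZeroMorphisms C] [HasFiniteLimits C]

/-- `(r₁, r₂) : R ⇉ A` is an internal equivalence relation. -/
structure IsEquivRelation {R A : C} (r₁ r₂ : R ⟶ A) : Prop where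
  mono : Mono (prod.lift r₁ r₂)
  refl : ∃ e : A ⟶ R, e ≫ r₁ = 𝟙 A ∧ e ≫ r₂ = 𝟙 A
  symm : ∃ σ : R ⟶ R, σ ≫ r₁ = r₂ ∧ σ ≫ r₂ = r₁
  trans : ∃ τ : pullback r₂ r₁ ⟶ R,
    τ ≫ r₁ = pullback.fst r₂ r₁ ≫ r₁ ∧ τ ≫ r₂ = pullback.snd r₂ r₁ ≫ r₂

/-- A monomorphism `k : X ⟶ A` is Bourn-normal if it is the zero class of some internal
equivalence relation on `A`, i.e. `k` is the pullback of the relation's pairing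
`⟨r₁,r₂⟩ : R → A × A` along `⟨1,0⟩ : A → A × A`. -/
def BournNormal {X A : C} (k : X ⟶ A) : Prop :=
  Mono k ∧ ∃ (R : C) (r₁ r₂ : R ⟶ A) (_ : IsEquivRelation r₁ r₂) (κ : X ⟶ R),
    IsPullback κ k (prod.lift r₁ r₂) (prod.lift (𝟙 A) 0)

/-- In a unital category in which every morphism with zero kernel is a monomorphism,
Bourn-normal monomorphisms with the same codomain and zero pullback Huq-commute. -/
theorem stmt13 [HasZeroObject C] [Unital C]
    (hcond : ∀ {A B : C} (f : A ⟶ B), IsZero (kernel f) → Mono f)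
    {X Y A : C} (k : X ⟶ A) (l : Y ⟶ A)
    (hk : BournNormal k) (hl : BournNormal l)
    (hmeet : IsZero (pullback k l)) :
    HuqCommute k l := by
  obtain ⟨hkm, R, r₁, r₂, hR, κ, hκ⟩ := hk
  obtain ⟨hlm, S, s₁, s₂, hS, lam, hlam⟩ := hl
  obtain ⟨eR, heR1, heR2⟩ := hR.refl
  obtain ⟨eS, heS1, heS2⟩ := hS.refl
  obtain ⟨sS, hsS1, hsS2⟩ := hS.symm
  have hκ1 : κ ≫ r₁ = k := by
    have h := congrArg (· ≫ (prod.fst : A ⨯ A ⟶ A)) hκ.w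
    simp only [Category.assoc] at h
    rw [prod.lift_fst, prod.lift_fst] at h
    simpa using h
  have hκ2 : κ ≫ r₂ = 0 := by
    have h := congrArg (· ≫ (prod.snd : A ⨯ A ⟶ A)) hκ.w
    simp only [Category.assoc] at h
    rw [prod.lift_snd, prod.lift_snd] at h
    simpa using h
  have hlam1 : lam ≫ s₁ = l := by
    have h := congrArg (· ≫ (prod.fst : A ⨯ A ⟶ A)) hlam.w
    simp only [Category.assoc] at h
    rw [prod.lift_fst, prod.lift_fst] at h
    simpa using h
  have hlam2 : lam ≫ s₂ = 0 := by
    have h := congrArg (· ≫ (prod.snd : A ⨯ A ⟶ A)) hlam.w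
    simp only [Category.assoc] at h
    rw [prod.lift_snd, prod.lift_snd] at h
    simpa using h
  set μ : pullback r₁ s₂ ⟶ A ⨯ A :=
    prod.lift (pullback.snd r₁ s₂ ≫ s₁) (pullback.fst r₁ s₂ ≫ r₂) with hμdef
  -- the kernel of μ is zero
  have hker : IsZero (kernel μ) := by
    rw [IsZero.iff_id_eq_zero]
    set ι := kernel.ι μ with hιdef
    have hc : ι ≫ μ = 0 := kernel.condition μ
    set ρb : kernel μ ⟶ R := ι ≫ pullback.fst r₁ s₂ with hρdef
    set σb : kernel μ ⟶ S := ι ≫ pullback.snd r₁ s₂ with hσdef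
    have h1 : ρb ≫ r₂ = 0 := by
      have h := congrArg (· ≫ (prod.snd : A ⨯ A ⟶ A)) hc
      rw [Category.assoc, show μ ≫ prod.snd = pullback.fst r₁ s₂ ≫ r₂ by rw [hμdef, prod.lift_snd], zero_comp] at h
      simpa [hρdef] using h
    have h2 : σb ≫ s₁ = 0 := by
      have h := congrArg (· ≫ (prod.fst : A ⨯ A ⟶ A)) hc
      rw [Category.assoc, show μ ≫ prod.fst = pullback.snd r₁ s₂ ≫ s₁ by rw [hμdef, prod.lift_fst], zero_comp] at h
      simpa [hσdef] using h
    set a : kernel μ ⟶ A := ρb ≫ r₁ with hadef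
    have haσ : σb ≫ s₂ = a := by
      rw [hadef, hρdef, hσdef, Category.assoc, Category.assoc, pullback.condition]
    have wx : ρb ≫ prod.lift r₁ r₂ = a ≫ prod.lift (𝟙 A) 0 := by
      apply Limits.prod.hom_ext <;> simp [h1, hadef]
    have wy : (σb ≫ sS) ≫ prod.lift s₁ s₂ = a ≫ prod.lift (𝟙 A) 0 := by
      apply Limits.prod.hom_ext <;>
        simp [Category.assoc, hsS1, hsS2, h2, haσ]
    set x : kernel μ ⟶ X := hκ.lift ρb a wx with hxdef
    set y : kernel μ ⟶ Y := hlam.lift (σb ≫ sS) a wy with hydef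
    have hxk : x ≫ k = a := hκ.lift_snd ρb a wx
    have hyl : y ≫ l = a := hlam.lift_snd (σb ≫ sS) a wy
    have hxκ : x ≫ κ = ρb := hκ.lift_fst ρb a wx
    have hylam : y ≫ lam = σb ≫ sS := hlam.lift_fst (σb ≫ sS) a wy
    set z : kernel μ ⟶ pullback k l := pullback.lift x y (hxk.trans hyl.symm) with hzdef
    have hz : z = 0 := hmeet.eq_of_tgt z 0
    have hx0 : x = 0 := by
      rw [← pullback.lift_fst x y (hxk.trans hyl.symm), ← hzdef, hz, zero_comp]
    have hy0 : y = 0 := by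
      rw [← pullback.lift_snd x y (hxk.trans hyl.symm), ← hzdef, hz, zero_comp]
    have ha0 : a = 0 := by rw [← hxk, hx0, zero_comp]
    have hρ0 : ρb = 0 := by rw [← hxκ, hx0, zero_comp]
    have hσs0 : σb ≫ sS = 0 := by rw [← hylam, hy0, zero_comp]
    have hσ0 : σb = 0 := by
      haveI := hS.mono
      rw [← cancel_mono (prod.lift s₁ s₂)]
      apply Limits.prod.hom_ext <;> simp [h2, haσ, ha0]
    have hι0 : ι = 0 := by
      apply pullback.hom_ext
      · rw [← hρdef, hρ0, zero_comp]
      · rw [← hσdef, hσ0, zero_comp]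
    haveI : Mono ι := by rw [hιdef]; infer_instance
    rw [← cancel_mono ι, hι0, comp_zero, zero_comp]
  have hμ : Mono μ := hcond μ hker
  -- the two canonical maps into U
  have hucond : κ ≫ r₁ = (k ≫ eS) ≫ s₂ := by
    rw [hκ1, Category.assoc, heS2, Category.comp_id]
  have hvcond : (l ≫ eR) ≫ r₁ = (lam ≫ sS) ≫ s₂ := by
    rw [Category.assoc, heR1, Category.comp_id, Category.assoc, hsS2, hlam1]
  set u : X ⟶ pullback r₁ s₂ := pullback.lift κ (k ≫ eS) hucond with hudef
  set v : Y ⟶ pullback r₁ s₂ := pullback.lift (l ≫ eR) (lam ≫ sS) hvcond with hvdef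
  have hu : u ≫ μ = prod.lift (𝟙 X) 0 ≫ prod.map k l := by
    apply Limits.prod.hom_ext
    · rw [hμdef, Category.assoc, Category.assoc, prod.lift_fst, prod.map_fst, prod.lift_fst_assoc]
      simp [hudef, heS1, hκ2]
      rw [pullback.lift_snd_assoc]
      simp [hudef, heS1, hκ2]
    · rw [hμdef, Category.assoc, Category.assoc, prod.lift_snd, prod.map_snd, prod.lift_snd_assoc]
      simp [hudef, heS1, hκ2]
      rw [pullback.lift_fst_assoc]
      simp [hudef, heS1, hκ2]
  have hv : v ≫ μ = prod.lift 0 (𝟙 Y) ≫ prod.map k l := by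
    apply Limits.prod.hom_ext
    · rw [hμdef, Category.assoc, Category.assoc, prod.lift_fst, prod.map_fst, prod.lift_fst_assoc]
      simp [hvdef, heR2, hsS1, hlam2]
      rw [pullback.lift_snd_assoc]
      simp [hvdef, heR2, hsS1, hlam2]
    · rw [hμdef, Category.assoc, Category.assoc, prod.lift_snd, prod.map_snd, prod.lift_snd_assoc]
      simp [hvdef, heR2, hsS1, hlam2]
      rw [pullback.lift_fst_assoc]
      simp [hvdef, heR2, hsS1, hlam2]
  obtain ⟨t, ht⟩ := Unital.jse X Y μ hμ (prod.map k l) u v hu hv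
  haveI := hμ
  have htu : prod.lift (𝟙 X) 0 ≫ t = u := by
    rw [← cancel_mono μ, Category.assoc, ht, hu]
  have htv : prod.lift 0 (𝟙 Y) ≫ t = v := by
    rw [← cancel_mono μ, Category.assoc, ht, hv]
  refine ⟨t ≫ pullback.fst r₁ s₂ ≫ r₁, ?_, ?_⟩
  · rw [← Category.assoc, htu, hudef, ← Category.assoc, pullback.lift_fst, hκ1]
  · rw [← Category.assoc, htv, hvdef, ← Category.assoc, pullback.lift_fst,
      Category.assoc, heR1, Category.comp_id]
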